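/- Let H be a complex Hilbert space and let A, B be positive invertible bounded linear operators on H with AB = BA. Then for every ν ∈ [0,1], A^(1−ν) B^ν ≤ (1−ν)·A + ν·B in the operator order, where the real powers are defined via the continuous functional calculus. -/

import Mathlib

set_option maxHeartbeats 1000000
set_option synthInstance.maxHeartbeats 200000

open scoped NNReal
section AuxAMGM

variable {H : Type*} [NormedAddCommGroup H] [InnerProductSpace ℂ H] [CompleteSpace H]

private lemma amgm_commute_cfc_real (a b : H →L[ℂ] H) (h : Commute a b) (f : ℝ → ℝ) :
    Commute (cfc f a) b := by
  refine cfc_cases (fun x => Commute x b) a f (Commute.zero_left b) fun hf ha => ?_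
  suffices ∀ g : C(spectrum ℝ a, ℝ), Commute (cfcHom ha g) b from this _
  intro g
  induction g using ContinuousMap.induction_on_of_compact with
  | const r =>
      have h1 : (ContinuousMap.const (spectrum ℝ a) r) = algebraMap ℝ C(spectrum ℝ a, ℝ) r := rfl
      rw [h1, AlgHomClass.commutes]
      exact Algebra.commute_algebraMap_left r b
  | id => rw [cfcHom_id ha]; exact h
  | star_id =>
      have h1 : star ((ContinuousMap.id ℝ).restrict (spectrum ℝ a)) =
          (ContinuousMap.id ℝ).restrict (spectrum ℝ a) := by ext x; simp
      rw [h1, cfcHom_id ha]; exact h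
  | add f g hf hg => rw [map_add]; exact hf.add_left hg
  | mul f g hf hg => rw [map_mul]; exact hf.mul_left hg
  | frequently f hf =>
      have hc : IsClosed {g : C(spectrum ℝ a, ℝ) | Commute (cfcHom ha g) b} := by
        have : Continuous (cfcHom ha (R := ℝ)) := (cfcHom_isClosedEmbedding ha).continuous
        exact isClosed_eq (by fun_prop) (by fun_prop)
      exact hc.closure_subset (mem_closure_iff_frequently.mpr hf)

private lemma amgm_commute_rpow (a b : H →L[ℂ] H) (ha : 0 ≤ a) (h : Commute a b) (y : ℝ) :
    Commute (a ^ y) b := by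
  rw [CFC.rpow_def, cfc_nnreal_eq_real _ a ha]
  exact amgm_commute_cfc_real a b h _

private lemma amgm_spec_pos (a : H →L[ℂ] H) (ha : 0 ≤ a) (hau : IsUnit a) :
    ∀ x ∈ spectrum ℝ a, 0 < x := by
  intro x hx
  have h0 : (0:ℝ) ∉ spectrum ℝ a := spectrum.zero_notMem ℝ hau
  have h1 : 0 ≤ x := spectrum_nonneg_of_nonneg ha hx
  exact lt_of_le_of_ne h1 (fun h => h0 (h ▸ hx))

private lemma amgm_rpow_eq_exp_log (a : H →L[ℂ] H) (ha : 0 ≤ a) (hau : IsUnit a) (y : ℝ) :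
    a ^ y = NormedSpace.exp (y • CFC.log a) := by
  have hpos := amgm_spec_pos a ha hau
  have hlog : ContinuousOn Real.log (spectrum ℝ a) := by
    fun_prop (disch := intro x hx; exact (hpos x hx).ne')
  have hlogc : ContinuousOn (fun x : ℝ => y * Real.log x) (spectrum ℝ a) :=
    continuousOn_const.mul hlog
  have h1 : y • CFC.log a = cfc (fun x : ℝ => y * Real.log x) a := by
    rw [CFC.log, ← cfc_smul y Real.log a hlog]
    exact cfc_congr fun x _ => by simp [smul_eq_mul]
  have hsa : IsSelfAdjoint (cfc (fun x : ℝ => y * Real.log x) a) := cfc_predicate _ a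
  rw [h1, ← CFC.real_exp_eq_normedSpace_exp hsa,
    ← cfc_comp' Real.exp (fun x : ℝ => y * Real.log x) a (by fun_prop) hlogc]
  rw [CFC.rpow_def, cfc_nnreal_eq_real _ a ha]
  refine cfc_congr fun x hx => ?_
  have hx' := hpos x hx
  show ((x.toNNReal ^ y : ℝ≥0) : ℝ) = Real.exp (y * Real.log x)
  rw [NNReal.coe_rpow, Real.coe_toNNReal x hx'.le, mul_comm y, ← Real.rpow_def_of_pos hx']

private lemma amgm_mul_nonneg (a b : H →L[ℂ] H) (ha : 0 ≤ a) (hb : 0 ≤ b)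
    (hau : IsUnit a) (h : Commute a b) : 0 ≤ a * b := by
  set c := a ^ (1/2 : ℝ) with hc
  have hc0 : (0 : H →L[ℂ] H) ≤ c := CFC.rpow_nonneg
  have hcsa : IsSelfAdjoint c := .of_nonneg hc0
  have hcb : Commute c b := amgm_commute_rpow a b ha h _
  have hcc : c * c = a := by
    rw [hc, ← CFC.rpow_add hau]
    norm_num
    exact CFC.rpow_one a ha
  have h2 : c * c * b = c * b * c := by
    conv_lhs => rw [mul_assoc, hcb.eq]
    rw [mul_assoc]
  have h3 : a * b = star c * b * c := by rw [hcsa.star_eq, ← hcc, h2]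
  rw [h3]
  exact star_left_conjugate_nonneg hb c

private lemma amgm_log_mul (a b : H →L[ℂ] H) (ha : 0 ≤ a) (hb : 0 ≤ b)
    (hau : IsUnit a) (hbu : IsUnit b) (h : Commute a b) :
    CFC.log (a * b) = CFC.log a + CFC.log b := by
  have hla : IsSelfAdjoint (CFC.log a) := IsSelfAdjoint.log
  have hlb : IsSelfAdjoint (CFC.log b) := IsSelfAdjoint.log
  have h1 : Commute (CFC.log a) b := amgm_commute_cfc_real a b h Real.log
  have hcomm : Commute (CFC.log a) (CFC.log b) :=
    (amgm_commute_cfc_real b (CFC.log a) h1.symm Real.log).symm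
  have hexp : NormedSpace.exp (CFC.log a + CFC.log b) = a * b := by
    rw [NormedSpace.exp_add_of_commute_of_mem_ball (𝕂 := ℝ) hcomm
      ((NormedSpace.expSeries_radius_eq_top ℝ (H →L[ℂ] H)).symm ▸ edist_lt_top _ _)
      ((NormedSpace.expSeries_radius_eq_top ℝ (H →L[ℂ] H)).symm ▸ edist_lt_top _ _), CFC.exp_log a (hau.isStrictlyPositive ha),
      CFC.exp_log b (hbu.isStrictlyPositive hb)]
  rw [← hexp, CFC.log_exp _ (hla.add hlb)]

private lemma amgm_mul_rpow (a b : H →L[ℂ] H) (ha : 0 ≤ a) (hb : 0 ≤ b)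
    (hau : IsUnit a) (hbu : IsUnit b) (h : Commute a b) (y : ℝ) :
    (a * b) ^ y = a ^ y * b ^ y := by
  have hab : 0 ≤ a * b := amgm_mul_nonneg a b ha hb hau h
  have habu : IsUnit (a * b) := hau.mul hbu
  have h1 : Commute (CFC.log a) b := amgm_commute_cfc_real a b h Real.log
  have hcomm : Commute (CFC.log a) (CFC.log b) :=
    (amgm_commute_cfc_real b (CFC.log a) h1.symm Real.log).symm
  have hsmul : Commute (y • CFC.log a) (y • CFC.log b) := by
    unfold Commute SemiconjBy
    rw [smul_mul_assoc, mul_smul_comm, smul_mul_assoc, mul_smul_comm, hcomm.eq]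
  rw [amgm_rpow_eq_exp_log _ hab habu, amgm_log_mul a b ha hb hau hbu h, smul_add,
    NormedSpace.exp_add_of_commute_of_mem_ball (𝕂 := ℝ) hsmul
      ((NormedSpace.expSeries_radius_eq_top ℝ (H →L[ℂ] H)).symm ▸ edist_lt_top _ _)
      ((NormedSpace.expSeries_radius_eq_top ℝ (H →L[ℂ] H)).symm ▸ edist_lt_top _ _),
    ← amgm_rpow_eq_exp_log a ha hau, ← amgm_rpow_eq_exp_log b hb hbu]

end AuxAMGM

/-- Arithmetic–geometric mean inequality for commuting positive invertible operators:
`A^(1−ν) B^ν ≤ (1−ν)A + νB` for `ν ∈ [0,1]`. Real powers are via the continuous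
functional calculus (`CFC.rpow`, written `A ^ ν`). -/
theorem stmt_7 {H : Type*} [NormedAddCommGroup H] [InnerProductSpace ℂ H]
    [CompleteSpace H] (A B : H →L[ℂ] H) (hA : 0 ≤ A) (hB : 0 ≤ B)
    (hAu : IsUnit A) (hBu : IsUnit B) (hAB : A * B = B * A)
    (ν : ℝ) (hν : ν ∈ Set.Icc (0 : ℝ) 1) :
    A ^ (1 - ν) * B ^ ν ≤ (1 - ν) • A + ν • B := by
  obtain ⟨hν0, hν1⟩ := hν
  set u : (H →L[ℂ] H)ˣ := hAu.unit with hu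
  have huA : (u : H →L[ℂ] H) = A := hAu.unit_spec
  have hABc : Commute A B := hAB
  have huB : Commute (u : H →L[ℂ] H) B := by rw [huA]; exact hABc
  have hAinvB : Commute (↑u⁻¹ : H →L[ℂ] H) B := huB.units_inv_left
  have hu0 : (0 : H →L[ℂ] H) ≤ ↑u := by rw [huA]; exact hA
  have hAinv0 : 0 ≤ (↑u⁻¹ : H →L[ℂ] H) := by
    rw [← CFC.rpow_neg_one_eq_inv u hu0]
    exact CFC.rpow_nonneg
  set T : H →L[ℂ] H := ↑u⁻¹ * B with hT
  have hT0 : 0 ≤ T := amgm_mul_nonneg _ B hAinv0 hB u⁻¹.isUnit hAinvB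
  have hTu : IsUnit T := u⁻¹.isUnit.mul hBu
  have hTpos := amgm_spec_pos T hT0 hTu
  -- Step 1 : T ^ ν = A ^ (-ν) * B ^ ν
  have step1 : T ^ ν = A ^ (-ν) * B ^ ν := by
    rw [hT, amgm_mul_rpow _ B hAinv0 hB u⁻¹.isUnit hBu hAinvB ν]
    congr 1
    rw [← CFC.rpow_neg u ν hu0, huA]
  -- Step 2 : Young's inequality via scalar CFC
  have hrpow_cont : ContinuousOn (fun x : ℝ => x ^ ν) (spectrum ℝ T) := fun x hx =>
    (Real.continuousAt_rpow_const x ν (Or.inl (hTpos x hx).ne')).continuousWithinAt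
  have haff_cont : ContinuousOn (fun x : ℝ => (1 - ν) + ν * x) (spectrum ℝ T) := by fun_prop
  have hTrpow : T ^ ν = cfc (fun x : ℝ => x ^ ν) T := by
    rw [CFC.rpow_def, cfc_nnreal_eq_real _ T hT0]
    refine cfc_congr fun x hx => ?_
    have hx0 : 0 ≤ x := (hTpos x hx).le
    show ((x.toNNReal ^ ν : ℝ≥0) : ℝ) = x ^ ν
    rw [NNReal.coe_rpow, Real.coe_toNNReal x hx0]
  have haff : cfc (fun x : ℝ => (1 - ν) + ν * x) T = (1 - ν) • 1 + ν • T := by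
    rw [cfc_add T (fun _ => (1 - ν)) (fun x => ν * x) (by fun_prop) (by fun_prop),
      cfc_const (1 - ν) T (.of_nonneg hT0), cfc_const_mul_id ν T (.of_nonneg hT0),
      Algebra.algebraMap_eq_smul_one]
  have step2 : T ^ ν ≤ (1 - ν) • 1 + ν • T := by
    rw [hTrpow, ← haff]
    rw [cfc_le_iff _ _ T hrpow_cont haff_cont (.of_nonneg hT0)]
    intro x hx
    have hx0 : 0 ≤ x := (hTpos x hx).le
    have := Real.geom_mean_le_arith_mean2_weighted (w₁ := 1 - ν) (w₂ := ν) (p₁ := 1)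
      (p₂ := x) (by linarith) hν0 zero_le_one hx0 (by ring)
    simpa using this
  -- Step 3 : multiply by A on the left
  have huArefl : Commute (u : H →L[ℂ] H) A := by rw [huA]
  have hTA : Commute T A := (huArefl.units_inv_left).mul_left hABc.symm
  have hXA : Commute (T ^ ν) A := amgm_commute_rpow T A hT0 hTA ν
  have hYA : Commute ((1 - ν) • 1 + ν • T) A :=
    ((Commute.one_left A).smul_left _).add_left (hTA.smul_left _)
  set Z : H →L[ℂ] H := ((1 - ν) • 1 + ν • T) - T ^ ν with hZ
  have hZ0 : 0 ≤ Z := sub_nonneg.mpr step2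
  have hAZ : Commute A Z := (hYA.symm).sub_right (hXA.symm)
  have hAZ0 : 0 ≤ A * Z := by
    set c : H →L[ℂ] H := A ^ (1/2 : ℝ) with hc
    have hc0 : (0 : H →L[ℂ] H) ≤ c := CFC.rpow_nonneg
    have hcc : c * c = A := by
      rw [hc, ← CFC.rpow_add hAu]
      norm_num
      exact CFC.rpow_one A hA
    have hcZ : Commute c Z := amgm_commute_rpow A Z hA hAZ _
    have h2 : c * c * Z = c * Z * c := by
      conv_lhs => rw [mul_assoc, hcZ.eq]
      rw [mul_assoc]
    have h3 : A * Z = star c * Z * c := by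
      rw [(IsSelfAdjoint.of_nonneg hc0).star_eq, ← hcc, h2]
    rw [h3]
    exact star_left_conjugate_nonneg hZ0 c
  have hmul : A * (T ^ ν) ≤ A * ((1 - ν) • 1 + ν • T) := by
    rw [← sub_nonneg, ← mul_sub]
    exact hAZ0
  have hAT : A * T = B := by
    rw [hT, ← mul_assoc, ← huA, Units.mul_inv, one_mul]
  have hLHS : A * (T ^ ν) = A ^ (1 - ν) * B ^ ν := by
    rw [step1, ← mul_assoc]
    congr 1
    nth_rewrite 1 [← CFC.rpow_one A hA]
    rw [← CFC.rpow_add hAu, sub_eq_add_neg]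
  have hRHS : A * ((1 - ν) • 1 + ν • T) = (1 - ν) • A + ν • B := by
    rw [mul_add, mul_smul_comm, mul_one, mul_smul_comm, hAT]
  rw [← hLHS, ← hRHS]
  exact hmul
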